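/- arXiv:2202.12183 — 5 statements merged into one kernel-verified Lean document; each statement's English description precedes it below -/
import Mathlib

section
/- Suppose the surrogate loss dominates the indicator, i.e. for every query q and all items x', x in S_q one has ℓ(h_q(x'; w) − h_q(x; w)) ≥ 1[h_q(x'; w) − h_q(x; w) ≥ 0]. Then L(w) ≤ NDCG(w); that is, the smooth NDCG surrogate (1/N) Σ_{q=1}^N (1/Z_q) Σ_{x_i ∈ S_q^+} (2^{y_i^q} − 1) / log₂(ḡ(w; x_i^q, S_q) + 1) is a lower bound of the NDCG value (1/N) Σ_{q=1}^N (1/Z_q) Σ_{x_i ∈ S_q^+} (2^{y_i^q} − 1) / log₂(r(w; x_i^q, S_q) + 1). -/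
open Finset Real
open scoped Classical

/-- if the surrogate loss `ℓ` dominates the 0-1 indicator pointwise, then the
smooth NDCG surrogate `L(w)` is a lower bound on the NDCG value. -/
theorem ndcg_surrogate_lower_bound
    {ι : Type*} (N : ℕ) (hN : 0 < N)
    (S : Fin N → Finset ι) (hS : ∀ q, (S q).Nonempty)
    (y : Fin N → ι → ℝ) (hy : ∀ q, ∀ x ∈ S q, 0 ≤ y q x)
    (Z : Fin N → ℝ) (hZ : ∀ q, 0 < Z q)
    (h : Fin N → ι → ℝ) (ℓ : ℝ → ℝ)
    (hdom : ∀ q, ∀ x' ∈ S q, ∀ x ∈ S q,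
      (if 0 ≤ h q x' - h q x then (1 : ℝ) else 0) ≤ ℓ (h q x' - h q x)) :
    (1 / N : ℝ) * ∑ q, (1 / Z q) *
        ∑ x ∈ (S q).filter (fun x => 0 < y q x),
          ((2 : ℝ) ^ (y q x) - 1) /
            Real.logb 2 ((∑ x' ∈ S q, ℓ (h q x' - h q x)) + 1)
      ≤ (1 / N : ℝ) * ∑ q, (1 / Z q) *
        ∑ x ∈ (S q).filter (fun x => 0 < y q x),
          ((2 : ℝ) ^ (y q x) - 1) /
            Real.logb 2
              ((∑ x' ∈ S q, if 0 ≤ h q x' - h q x then (1 : ℝ) else 0) + 1) := by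
  apply mul_le_mul_of_nonneg_left _ (by positivity)
  apply Finset.sum_le_sum
  intro q _
  apply mul_le_mul_of_nonneg_left _ (le_of_lt (one_div_pos.mpr (hZ q)))
  apply Finset.sum_le_sum
  intro x hx
  rw [Finset.mem_filter] at hx
  obtain ⟨hxS, hyx⟩ := hx
  -- rank ≥ 1
  have hrank : (1 : ℝ) ≤ ∑ x' ∈ S q, if 0 ≤ h q x' - h q x then (1 : ℝ) else 0 := by
    have := Finset.single_le_sum
      (f := fun x' => if 0 ≤ h q x' - h q x then (1 : ℝ) else 0)
      (fun i _ => by positivity) hxS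
    simpa using this
  have hdoms : (∑ x' ∈ S q, if 0 ≤ h q x' - h q x then (1 : ℝ) else 0)
      ≤ ∑ x' ∈ S q, ℓ (h q x' - h q x) :=
    Finset.sum_le_sum fun x' hx' => hdom q x' hx' x hxS
  have hnum : (0 : ℝ) ≤ (2 : ℝ) ^ (y q x) - 1 := by
    have : (1 : ℝ) ≤ (2 : ℝ) ^ (y q x) :=
      Real.one_le_rpow (by norm_num) (le_of_lt hyx)
    linarith
  have hlog1 : 0 < Real.logb 2
      ((∑ x' ∈ S q, if 0 ≤ h q x' - h q x then (1 : ℝ) else 0) + 1) :=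
    Real.logb_pos (by norm_num) (by linarith)
  have hlogle : Real.logb 2
      ((∑ x' ∈ S q, if 0 ≤ h q x' - h q x then (1 : ℝ) else 0) + 1)
      ≤ Real.logb 2 ((∑ x' ∈ S q, ℓ (h q x' - h q x)) + 1) :=
    (Real.logb_le_logb (b := 2) (by norm_num) (by linarith) (by linarith)).mpr (by linarith)
  exact div_le_div_of_nonneg_left hnum hlog1 hlogle
end

section
/- Let a_1, …, a_n be real numbers and let 1 ≤ K ≤ n. Define φ(λ) = Kλ + Σ_{i=1}^n max(a_i − λ, 0). Then the K-th largest value among a_1, …, a_n is a minimizer of φ over ℝ, i.e. φ(a_{(K)}) ≤ φ(λ) for all λ ∈ ℝ, where a_{(1)} ≥ a_{(2)} ≥ ⋯ ≥ a_{(n)} denotes the decreasing rearrangement of the a_i. -/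
open Finset

/-- the K-th largest of `a_1, …, a_n` minimizes
`φ(λ) = Kλ + Σ_i max(a_i − λ, 0)` over ℝ.  The decreasing rearrangement is encoded by a
permutation `σ` with `i ↦ a (σ i)` antitone, so `a (σ ⟨K-1, _⟩)` is the K-th largest value. -/
theorem kth_largest_minimizes
    (n K : ℕ) (hK : 1 ≤ K) (hKn : K ≤ n) (a : Fin n → ℝ)
    (σ : Equiv.Perm (Fin n)) (hσ : Antitone fun i => a (σ i)) (lam : ℝ) :
    (K : ℝ) * a (σ ⟨K - 1, by omega⟩) +
        ∑ i, max (a i - a (σ ⟨K - 1, by omega⟩)) 0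
      ≤ (K : ℝ) * lam + ∑ i, max (a i - lam) 0 := by
  set t : ℝ := a (σ ⟨K - 1, by omega⟩) with ht
  -- S = indices of the top K values
  set S : Finset (Fin n) :=
    Finset.image (fun j : Fin K => σ (Fin.castLE hKn j)) Finset.univ with hS
  have hcard : S.card = K := by
    rw [hS, Finset.card_image_of_injective _
      (fun x y hxy => Fin.castLE_injective hKn (σ.injective hxy))]
    simp
  have h1 : ∀ i ∈ S, t ≤ a i := by
    intro i hi
    rw [hS, Finset.mem_image] at hi
    obtain ⟨j, -, rfl⟩ := hi
    exact hσ (show (⟨K - 1, by omega⟩ : Fin n) ≥ Fin.castLE hKn j by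
      simp [Fin.le_def]; omega)
  have h2 : ∀ i ∉ S, a i ≤ t := by
    intro i hi
    have hge : K ≤ (σ.symm i : ℕ) := by
      by_contra hlt
      push_neg at hlt
      apply hi
      rw [hS, Finset.mem_image]
      exact ⟨⟨(σ.symm i : ℕ), hlt⟩, Finset.mem_univ _, by
        have : Fin.castLE hKn ⟨(σ.symm i : ℕ), hlt⟩ = σ.symm i := by
          ext; simp
        rw [this]; simp⟩
    have : a (σ (σ.symm i)) ≤ t :=
      hσ (show (⟨K - 1, by omega⟩ : Fin n) ≤ σ.symm i by
        simp [Fin.le_def]; omega)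
    simpa using this
  -- split sums over S and Sᶜ
  have hsplit : ∀ μ : ℝ, (K : ℝ) * μ + ∑ i, max (a i - μ) 0
      = ∑ i ∈ S, (μ + max (a i - μ) 0) + ∑ i ∈ Sᶜ, max (a i - μ) 0 := by
    intro μ
    rw [← Finset.sum_add_sum_compl S (fun i => max (a i - μ) 0),
      Finset.sum_add_distrib, Finset.sum_const, hcard, nsmul_eq_mul]
    ring
  rw [hsplit t, hsplit lam]
  refine add_le_add (Finset.sum_le_sum ?_) (Finset.sum_le_sum ?_)
  · intro i hi
    have h := h1 i hi
    have e1 : max (a i - t) 0 = a i - t := max_eq_left (by linarith)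
    have e2 : a i - lam ≤ max (a i - lam) 0 := le_max_left _ _
    linarith
  · intro i hi
    have h := h2 i (Finset.mem_compl.mp hi)
    have e1 : max (a i - t) 0 = 0 := max_eq_right (by linarith)
    rw [e1]
    exact le_max_right _ _
end

section
/- Fix a parameter w. Suppose that: (i) there is a constant C > 0 such that for every query q and every item x_i^q ∈ S_q^+ one has ψ(h_q(x_i^q; w) − λ_q(w)) ≤ C · 1[h_q(x_i^q; w) − λ_q(w) ≥ 0], where λ_q(w) is such that h_q(x; w) ≥ λ_q(w) holds exactly for the items x in the top-K set S_q[K]; and (ii) ℓ(h_q(x'; w) − h_q(x; w)) ≥ 1[h_q(x'; w) − h_q(x; w) ≥ 0] for all items x', x ∈ S_q. Then (1/N) Σ_{q=1}^N Σ_{x_i ∈ S_q^+} ψ(h_q(x_i^q; w) − λ_q(w)) (2^{y_i^q} − 1) / (C Z_q^K log₂(ḡ(w; x_i^q, S_q) + 1)) ≤ (1/N) Σ_{q=1}^N (1/Z_q^K) Σ_{x_i ∈ S_q^+} 1[x_i^q ∈ S_q[K]] (2^{y_i^q} − 1) / log₂(r(w; x_i^q, S_q) + 1), i.e. the smoothed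 top-K surrogate is a lower bound of the top-K NDCG value. -/
open Finset Real
open scoped Classical

/-- if `ψ(h_q(x;w) − λ_q(w)) ≤ C·1[h_q(x;w) − λ_q(w) ≥ 0]` on the relevant
items, the threshold `λ_q(w)` selects exactly the top-K set `S_q[K]`, and the surrogate loss
`ℓ` dominates the 0-1 indicator, then the smoothed top-K NDCG surrogate is a lower bound of
the top-K NDCG value. -/
theorem topK_ndcg_surrogate_lower_bound
    {ι : Type*} (N K : ℕ) (hN : 0 < N)
    (S : Fin N → Finset ι) (hS : ∀ q, (S q).Nonempty)
    (y : Fin N → ι → ℝ) (hy : ∀ q, ∀ x ∈ S q, 0 ≤ y q x)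
    (ZK : Fin N → ℝ) (hZK : ∀ q, 0 < ZK q)
    (h : Fin N → ι → ℝ)
    (hdist : ∀ q, ∀ x ∈ S q, ∀ x' ∈ S q, h q x = h q x' → x = x')
    (TopK : Fin N → Finset ι)
    (hTopSub : ∀ q, TopK q ⊆ S q)
    (hTopCard : ∀ q, (TopK q).card = K)
    (lam : Fin N → ℝ)
    (hlam : ∀ q, ∀ x ∈ S q, (x ∈ TopK q ↔ lam q ≤ h q x))
    (ψ ℓ : ℝ → ℝ) (C : ℝ) (hC : 0 < C)
    (hψ : ∀ q, ∀ x ∈ (S q).filter (fun x => 0 < y q x),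
      ψ (h q x - lam q) ≤ C * (if 0 ≤ h q x - lam q then (1 : ℝ) else 0))
    (hdom : ∀ q, ∀ x' ∈ S q, ∀ x ∈ S q,
      (if 0 ≤ h q x' - h q x then (1 : ℝ) else 0) ≤ ℓ (h q x' - h q x)) :
    (1 / N : ℝ) * ∑ q, ∑ x ∈ (S q).filter (fun x => 0 < y q x),
        ψ (h q x - lam q) * ((2 : ℝ) ^ (y q x) - 1) /
          (C * ZK q * Real.logb 2 ((∑ x' ∈ S q, ℓ (h q x' - h q x)) + 1))
      ≤ (1 / N : ℝ) * ∑ q, (1 / ZK q) *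
        ∑ x ∈ (S q).filter (fun x => 0 < y q x),
          (if x ∈ TopK q then (1 : ℝ) else 0) * ((2 : ℝ) ^ (y q x) - 1) /
            Real.logb 2
              ((∑ x' ∈ S q, if 0 ≤ h q x' - h q x then (1 : ℝ) else 0) + 1) := by
  apply mul_le_mul_of_nonneg_left _ (by positivity)
  apply Finset.sum_le_sum
  intro q _
  rw [Finset.mul_sum]
  apply Finset.sum_le_sum
  intro x hx
  have hxS : x ∈ S q := (Finset.mem_filter.mp hx).1
  have hy0 : 0 < y q x := (Finset.mem_filter.mp hx).2
  set r : ℝ := ∑ x' ∈ S q, (if 0 ≤ h q x' - h q x then (1 : ℝ) else 0) with hr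
  set g : ℝ := ∑ x' ∈ S q, ℓ (h q x' - h q x) with hg
  have hr1 : (1 : ℝ) ≤ r := by
    rw [hr]
    calc (1 : ℝ) = ∑ x' ∈ {x}, (if 0 ≤ h q x' - h q x then (1 : ℝ) else 0) := by
          rw [Finset.sum_singleton, if_pos (by linarith)]
    _ ≤ _ := by
        apply Finset.sum_le_sum_of_subset_of_nonneg
        · simpa using hxS
        · intro i _ _; positivity
  have hrg : r ≤ g := Finset.sum_le_sum fun x' hx' => hdom q x' hx' x hxS
  have hLr : (1 : ℝ) ≤ Real.logb 2 (r + 1) := by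
    have h2 : Real.logb 2 2 ≤ Real.logb 2 (r + 1) :=
      Real.logb_le_logb_of_le (by norm_num) (by norm_num) (by linarith)
    simpa using h2
  have hLrg : Real.logb 2 (r + 1) ≤ Real.logb 2 (g + 1) := by
    exact Real.logb_le_logb_of_le (by norm_num) (by linarith) (by linarith)
  have hLrpos : 0 < Real.logb 2 (r + 1) := by linarith
  have hLgpos : 0 < Real.logb 2 (g + 1) := by linarith
  have hA : (0 : ℝ) < (2 : ℝ) ^ (y q x) - 1 := by
    have : (1 : ℝ) < (2 : ℝ) ^ (y q x) :=
      Real.one_lt_rpow_iff_of_pos (by norm_num) |>.mpr (Or.inl ⟨by norm_num, hy0⟩)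
    linarith
  set A : ℝ := (2 : ℝ) ^ (y q x) - 1
  have hψx := hψ q x hx
  by_cases htop : x ∈ TopK q
  · have hge : 0 ≤ h q x - lam q := by
      have := (hlam q x hxS).mp htop; linarith
    rw [if_pos hge] at hψx
    simp only [if_pos htop]
    by_cases hψ0 : ψ (h q x - lam q) ≤ 0
    · have hl : ψ (h q x - lam q) * A / (C * ZK q * Real.logb 2 (g + 1)) ≤ 0 := by
        apply div_nonpos_of_nonpos_of_nonneg
        · exact mul_nonpos_of_nonpos_of_nonneg hψ0 hA.le
        · exact (mul_pos (mul_pos hC (hZK q)) hLgpos).le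
      refine hl.trans ?_
      refine mul_nonneg (one_div_nonneg.mpr (hZK q).le) (div_nonneg ?_ hLrpos.le)
      simpa using hA.le
    · push_neg at hψ0
      have key : ψ (h q x - lam q) * A / (C * ZK q * Real.logb 2 (g + 1)) ≤
          C * A / (C * (ZK q * Real.logb 2 (r + 1))) := by
        apply div_le_div₀ (mul_nonneg hC.le hA.le)
        · have : ψ (h q x - lam q) ≤ C := by simpa using hψx
          exact mul_le_mul_of_nonneg_right this hA.le
        · exact mul_pos hC (mul_pos (hZK q) hLrpos)
        · rw [← mul_assoc]
          exact mul_le_mul_of_nonneg_left hLrg (mul_pos hC (hZK q)).le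
      refine key.trans_eq ?_
      rw [mul_div_mul_left _ _ (ne_of_gt hC)]
      rw [one_div, ← div_div]
      ring
  · have hlt : ¬ (0 ≤ h q x - lam q) := by
      intro habs
      exact htop ((hlam q x hxS).mpr (by linarith))
    rw [if_neg hlt, mul_zero] at hψx
    simp only [if_neg htop, zero_mul, zero_div, mul_zero]
    apply div_nonpos_of_nonpos_of_nonneg
    · exact mul_nonpos_of_nonpos_of_nonneg hψx hA.le
    · exact (mul_pos (mul_pos hC (hZK q)) hLgpos).le
end

section
/- Fix τ₁ > 0, τ₂ > 0, an integer K, an integer N ≥ 1, and real numbers h_1, …, h_N. Let L(λ) = (K/N)λ + (τ₂/2)λ² + (1/N) Σ_{i=1}^N τ₁ ln(1 + exp((h_i − λ)/τ₁)) and L̃(λ) = (K/N)λ + (1/N) Σ_{i=1}^N max(h_i − λ, 0). Let λ* be a minimizer of L and λ̃* be a minimizer of L̃. Then L̃(λ*) − L̃(λ̃*) ≤ (τ₂/2)(λ̃*)² + τ₁·ln 2 − (τ₂/2)(λ*)²; in particular, since L̃(λ*) ≥ L̃(λ̃*), one has |L̃(λ*) − L̃(λ̃*)| ≤ (τ₂/2)(λ̃*)²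 + τ₁·ln 2 − (τ₂/2)(λ*)². -/
open Finset

/-- The smoothed lower-level objective
`L(λ) = (K/N)λ + (τ₂/2)λ² + (1/N) Σᵢ τ₁ ln(1 + exp((hᵢ − λ)/τ₁))`. -/
noncomputable def smoothedL (τ₁ τ₂ : ℝ) (K : ℤ) (N : ℕ) (h : Fin N → ℝ) (lam : ℝ) : ℝ :=
  ((K : ℝ) / N) * lam + (τ₂ / 2) * lam ^ 2 +
    (1 / N : ℝ) * ∑ i, τ₁ * Real.log (1 + Real.exp ((h i - lam) / τ₁))

/-- The unsmoothed, unregularized objective `L̃(λ) = (K/N)λ + (1/N) Σᵢ max(hᵢ − λ, 0)`. -/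
noncomputable def Ltilde (K : ℤ) (N : ℕ) (h : Fin N → ℝ) (lam : ℝ) : ℝ :=
  ((K : ℝ) / N) * lam + (1 / N : ℝ) * ∑ i, max (h i - lam) 0

lemma softplus_lower (τ : ℝ) (hτ : 0 < τ) (x : ℝ) :
    max x 0 ≤ τ * Real.log (1 + Real.exp (x / τ)) := by
  have h1 : (0:ℝ) < 1 + Real.exp (x / τ) := by positivity
  have hlog0 : 0 ≤ Real.log (1 + Real.exp (x / τ)) := by
    apply Real.log_nonneg; nlinarith [Real.exp_pos (x / τ)]
  have hlogu : x / τ ≤ Real.log (1 + Real.exp (x / τ)) := by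
    calc x / τ = Real.log (Real.exp (x / τ)) := (Real.log_exp _).symm
    _ ≤ _ := Real.log_le_log (Real.exp_pos _) (by linarith)
  rcases le_total x 0 with hx | hx
  · rw [max_eq_right hx]; positivity
  · rw [max_eq_left hx]
    have := (div_le_iff₀ hτ).mp hlogu
    linarith [this]

lemma softplus_upper (τ : ℝ) (hτ : 0 < τ) (x : ℝ) :
    τ * Real.log (1 + Real.exp (x / τ)) ≤ max x 0 + τ * Real.log 2 := by
  have key : 1 + Real.exp (x / τ) ≤ 2 * Real.exp (max (x / τ) 0) := by
    have h1 : Real.exp (x / τ) ≤ Real.exp (max (x / τ) 0) :=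
      Real.exp_le_exp.mpr (le_max_left _ _)
    have h2 : (1:ℝ) ≤ Real.exp (max (x / τ) 0) := by
      rw [show (1:ℝ) = Real.exp 0 from (Real.exp_zero).symm]
      exact Real.exp_le_exp.mpr (le_max_right _ _)
    linarith
  have hpos : (0:ℝ) < 1 + Real.exp (x / τ) := by positivity
  have hlog : Real.log (1 + Real.exp (x / τ)) ≤ Real.log 2 + max (x / τ) 0 := by
    calc Real.log (1 + Real.exp (x / τ)) ≤ Real.log (2 * Real.exp (max (x / τ) 0)) :=
          Real.log_le_log hpos key
      _ = Real.log 2 + max (x / τ) 0 := by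
          rw [Real.log_mul (by norm_num) (Real.exp_ne_zero _), Real.log_exp]
  have hmax : τ * max (x / τ) 0 = max x 0 := by
    rcases le_total x 0 with hx | hx
    · rw [max_eq_right (div_nonpos_of_nonpos_of_nonneg hx hτ.le), max_eq_right hx, mul_zero]
    · rw [max_eq_left (div_nonneg hx hτ.le), max_eq_left hx, mul_div_cancel₀ _ hτ.ne']
  nlinarith [hlog, hmax]

/-- if `λ*` minimizes `L` and `λ̃*` minimizes `L̃`, then
`L̃(λ*) − L̃(λ̃*) ≤ (τ₂/2)(λ̃*)² + τ₁ ln 2 − (τ₂/2)(λ*)²`, and the same bound holds for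
`|L̃(λ*) − L̃(λ̃*)|`. -/
theorem Ltilde_gap_bound
    (τ₁ τ₂ : ℝ) (hτ₁ : 0 < τ₁) (hτ₂ : 0 < τ₂) (K : ℤ) (N : ℕ) (hN : 1 ≤ N)
    (h : Fin N → ℝ) (lamS lamT : ℝ)
    (hminS : ∀ μ : ℝ, smoothedL τ₁ τ₂ K N h lamS ≤ smoothedL τ₁ τ₂ K N h μ)
    (hminT : ∀ μ : ℝ, Ltilde K N h lamT ≤ Ltilde K N h μ) :
    Ltilde K N h lamS - Ltilde K N h lamT ≤
        (τ₂ / 2) * lamT ^ 2 + τ₁ * Real.log 2 - (τ₂ / 2) * lamS ^ 2 ∧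
      |Ltilde K N h lamS - Ltilde K N h lamT| ≤
        (τ₂ / 2) * lamT ^ 2 + τ₁ * Real.log 2 - (τ₂ / 2) * lamS ^ 2 := by
  have hNpos : (0:ℝ) < N := by exact_mod_cast hN
  -- lower sandwich at lamS
  have low : Ltilde K N h lamS ≤ smoothedL τ₁ τ₂ K N h lamS - (τ₂ / 2) * lamS ^ 2 := by
    unfold Ltilde smoothedL
    have hsum : ∑ i, max (h i - lamS) 0 ≤
        ∑ i, τ₁ * Real.log (1 + Real.exp ((h i - lamS) / τ₁)) :=
      Finset.sum_le_sum fun i _ => softplus_lower τ₁ hτ₁ _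
    have : (1 / N : ℝ) * ∑ i, max (h i - lamS) 0 ≤
        (1 / N : ℝ) * ∑ i, τ₁ * Real.log (1 + Real.exp ((h i - lamS) / τ₁)) := by
      apply mul_le_mul_of_nonneg_left hsum; positivity
    linarith
  -- upper sandwich at lamT
  have upp : smoothedL τ₁ τ₂ K N h lamT - (τ₂ / 2) * lamT ^ 2 ≤
      Ltilde K N h lamT + τ₁ * Real.log 2 := by
    unfold Ltilde smoothedL
    have hsum : ∑ i, τ₁ * Real.log (1 + Real.exp ((h i - lamT) / τ₁)) ≤
        ∑ i, (max (h i - lamT) 0 + τ₁ * Real.log 2) :=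
      Finset.sum_le_sum fun i _ => softplus_upper τ₁ hτ₁ _
    rw [Finset.sum_add_distrib, Finset.sum_const, Finset.card_fin] at hsum
    have : (1 / N : ℝ) * ∑ i, τ₁ * Real.log (1 + Real.exp ((h i - lamT) / τ₁)) ≤
        (1 / N : ℝ) * (∑ i, max (h i - lamT) 0 + (N : ℝ) * (τ₁ * Real.log 2)) := by
      apply mul_le_mul_of_nonneg_left _ (by positivity)
      simpa using hsum
    have hfield : (1 / N : ℝ) * ((N : ℝ) * (τ₁ * Real.log 2)) = τ₁ * Real.log 2 := by
      field_simp
    rw [mul_add, hfield] at this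
    linarith
  have hmin := hminS lamT
  have key : Ltilde K N h lamS - Ltilde K N h lamT ≤
      (τ₂ / 2) * lamT ^ 2 + τ₁ * Real.log 2 - (τ₂ / 2) * lamS ^ 2 := by
    linarith
  refine ⟨key, ?_⟩
  rw [abs_of_nonneg (by linarith [hminT lamS])]
  exact key
end

section
/- Let F : ℝ^d → ℝ be differentiable with L_F-Lipschitz continuous gradient, let η > 0 satisfy η·L_F ≤ 1/2, let m ∈ ℝ^d, and set w′ = w − η·m. Then F(w′) ≤ F(w) + (η/2)‖∇F(w) − m‖² − (η/2)‖∇F(w)‖² − (η/4)‖m‖². -/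
/-- descent lemma with momentum direction: if `F : ℝ^d → ℝ` is differentiable
with `L_F`-Lipschitz gradient, `η L_F ≤ 1/2`, and `w' = w − η m`, then
`F(w') ≤ F(w) + (η/2)‖∇F(w) − m‖² − (η/2)‖∇F(w)‖² − (η/4)‖m‖²`. -/
theorem descent_lemma_momentum
    {d : ℕ} (F : EuclideanSpace ℝ (Fin d) → ℝ) (L_F : ℝ)
    (hdiff : Differentiable ℝ F)
    (hLip : ∀ x y : EuclideanSpace ℝ (Fin d),
      ‖gradient F x - gradient F y‖ ≤ L_F * ‖x - y‖)
    (η : ℝ) (hη : 0 < η) (hηL : η * L_F ≤ 1 / 2)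
    (w m : EuclideanSpace ℝ (Fin d)) :
    F (w - η • m) ≤
      F w + (η / 2) * ‖gradient F w - m‖ ^ 2 - (η / 2) * ‖gradient F w‖ ^ 2 -
        (η / 4) * ‖m‖ ^ 2 := by
  set v : EuclideanSpace ℝ (Fin d) := -(η • m) with hv
  have hwv : w - η • m = w + v := by simp [hv, sub_eq_add_neg]
  -- gradient is continuous
  have hgradcont : Continuous (gradient F) := by
    have : LipschitzWith (Real.toNNReal L_F) (gradient F) := by
      apply LipschitzWith.of_dist_le_mul
      intro x y
      calc dist (gradient F x) (gradient F y) = ‖gradient F x - gradient F y‖ := by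
            rw [dist_eq_norm]
        _ ≤ L_F * ‖x - y‖ := hLip x y
        _ ≤ Real.toNNReal L_F * ‖x - y‖ :=
            mul_le_mul_of_nonneg_right (Real.le_coe_toNNReal L_F) (norm_nonneg _)
        _ = Real.toNNReal L_F * dist x y := by rw [dist_eq_norm]
    exact this.continuous
  -- derivative of t ↦ F (w + t • v)
  have hderiv : ∀ t : ℝ, HasDerivAt (fun t : ℝ => F (w + t • v))
      (inner ℝ (gradient F (w + t • v)) v : ℝ) t := by
    intro t
    have hpath : HasDerivAt (fun t : ℝ => w + t • v) v t := by
      simpa using ((hasDerivAt_id t).smul_const v).const_add w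
    have hF := ((hdiff (w + t • v)).hasGradientAt).hasFDerivAt
    have := hF.comp_hasDerivAt t hpath
    simp at this
    have h2 : HasDerivAt (fun t : ℝ => F (w + t • v)) (fderiv ℝ F (w + t • v) v) t := this
    rw [gradient, InnerProductSpace.toDual_symm_apply]
    exact h2
  have hcontφ : Continuous (fun t : ℝ => (inner ℝ (gradient F (w + t • v)) v : ℝ)) := by
    apply Continuous.inner
    · exact hgradcont.comp (continuous_const.add (continuous_id.smul continuous_const))
    · exact continuous_const
  have hFTC : F (w + v) - F w
      = ∫ t in (0:ℝ)..1, (inner ℝ (gradient F (w + t • v)) v : ℝ) := by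
    have := intervalIntegral.integral_eq_sub_of_hasDerivAt
      (f := fun t : ℝ => F (w + t • v)) (fun t _ => hderiv t)
      (hcontφ.intervalIntegrable 0 1)
    simpa using this.symm
  -- pointwise bound
  have hpt : ∀ t ∈ Set.Icc (0:ℝ) 1,
      (inner ℝ (gradient F (w + t • v)) v : ℝ)
        ≤ inner ℝ (gradient F w) v + L_F * ‖v‖ ^ 2 * t := by
    intro t ht
    have h1 : (inner ℝ (gradient F (w + t • v)) v : ℝ) - inner ℝ (gradient F w) v
        = inner ℝ (gradient F (w + t • v) - gradient F w) v := by
      rw [inner_sub_left]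
    have h2 : (inner ℝ (gradient F (w + t • v) - gradient F w) v : ℝ)
        ≤ ‖gradient F (w + t • v) - gradient F w‖ * ‖v‖ := real_inner_le_norm _ _
    have h3 : ‖gradient F (w + t • v) - gradient F w‖ ≤ L_F * (t * ‖v‖) := by
      have := hLip (w + t • v) w
      simpa [norm_smul, abs_of_nonneg ht.1] using this
    nlinarith [norm_nonneg v, h2, mul_le_mul_of_nonneg_right h3 (norm_nonneg v)]
  have hint : (∫ t in (0:ℝ)..1, (inner ℝ (gradient F (w + t • v)) v : ℝ))
      ≤ ∫ t in (0:ℝ)..1, (inner ℝ (gradient F w) v + L_F * ‖v‖ ^ 2 * t : ℝ) := by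
    apply intervalIntegral.integral_mono_on (by norm_num)
    · exact hcontφ.intervalIntegrable 0 1
    · exact (continuous_const.add (continuous_const.mul continuous_id)).intervalIntegrable 0 1
    · exact hpt
  have hval : (∫ t in (0:ℝ)..1, (inner ℝ (gradient F w) v + L_F * ‖v‖ ^ 2 * t : ℝ))
      = inner ℝ (gradient F w) v + L_F * ‖v‖ ^ 2 / 2 := by
    have hI2 : IntervalIntegrable (fun t : ℝ => L_F * ‖v‖ ^ 2 * t)
        MeasureTheory.volume 0 1 :=
      (continuous_const.mul continuous_id').intervalIntegrable 0 1
    rw [intervalIntegral.integral_add intervalIntegrable_const hI2,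
      intervalIntegral.integral_const_mul, integral_id,
      intervalIntegral.integral_const]
    simp
    ring
  have key : F (w + v) ≤ F w + inner ℝ (gradient F w) v + L_F * ‖v‖ ^ 2 / 2 := by
    have := hFTC ▸ hint
    rw [hval] at this
    linarith
  rw [hwv]
  have hvnorm : ‖v‖ ^ 2 = η ^ 2 * ‖m‖ ^ 2 := by
    rw [hv, norm_neg, norm_smul]
    rw [Real.norm_eq_abs, abs_of_pos hη]
    ring
  have hinner : (inner ℝ (gradient F w) v : ℝ) = -η * inner ℝ (gradient F w) m := by
    rw [hv, inner_neg_right, real_inner_smul_right]; ring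
  have hexp : ‖gradient F w - m‖ ^ 2
      = ‖gradient F w‖ ^ 2 - 2 * inner ℝ (gradient F w) m + ‖m‖ ^ 2 := by
    rw [norm_sub_sq_real]
  have hm2 : (0:ℝ) ≤ ‖m‖ ^ 2 := sq_nonneg _
  rw [hvnorm, hinner] at key
  nlinarith [key, mul_le_mul_of_nonneg_right hηL hm2, mul_le_mul_of_nonneg_left hηL hη.le]
end
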